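/- Let K be a field, n ≥ 1, I ⊆ [n-1], and A_1, ..., A_k ∈ ASM^I(n). If A ∈ ASM(n) satisfies X_{A_1} ∪ ⋯ ∪ X_{A_k} = X_A, then A ∈ ASM^I(n). -/

import Mathlib

/-- The rank (corner sum) matrix entry `r_A(i,j)` (1-based `i j`, zero when `i = 0` or `j = 0`). -/
def rk (n : ℕ) (A : Matrix (Fin n) (Fin n) ℤ) (i j : ℕ) : ℤ :=
  ∑ p : Fin n, ∑ q : Fin n, if p.1 < i ∧ q.1 < j then A p q else 0

/-- `A` is an alternating sign matrix: entries in `{-1,0,1}`, the nonzero entries of each row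
and column alternate in sign and sum to `1`; equivalently all partial row and column sums are
`0` or `1` and every full row and column sums to `1`. -/
def IsASM (n : ℕ) (A : Matrix (Fin n) (Fin n) ℤ) : Prop :=
  (∀ i j, A i j = -1 ∨ A i j = 0 ∨ A i j = 1) ∧
  (∀ i : Fin n, ∀ j : ℕ, j ≤ n →
      (∑ q : Fin n, if q.1 < j then A i q else 0) = 0 ∨
      (∑ q : Fin n, if q.1 < j then A i q else 0) = 1) ∧
  (∀ j : Fin n, ∀ i : ℕ, i ≤ n →
      (∑ p : Fin n, if p.1 < i then A p j else 0) = 0 ∨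
      (∑ p : Fin n, if p.1 < i then A p j else 0) = 1) ∧
  (∀ i : Fin n, (∑ q : Fin n, A i q) = 1) ∧
  (∀ j : Fin n, (∑ p : Fin n, A p j) = 1)

/-- `A ∈ ASM^I(n)`: `A` is an ASM and for every `i ∈ I` and `j ∈ [n]`,
`r_A(i,j) = r_A(i-1,j) + 1` or `r_A(i,j) = r_A(i+1,j)`. -/
def InASMI (n : ℕ) (I : Finset ℕ) (A : Matrix (Fin n) (Fin n) ℤ) : Prop :=
  IsASM n A ∧ ∀ i ∈ I, ∀ j, 1 ≤ j → j ≤ n →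
    rk n A i j = rk n A (i - 1) j + 1 ∨ rk n A i j = rk n A (i + 1) j

/-- Bruhat order on `ASM(n)`: `A ≤ B` iff `r_A(i,j) ≥ r_B(i,j)` for all `i,j ∈ [n]`. -/
def blE (n : ℕ) (A B : Matrix (Fin n) (Fin n) ℤ) : Prop :=
  ∀ i j, 1 ≤ i → i ≤ n → 1 ≤ j → j ≤ n → rk n B i j ≤ rk n A i j

/-- Permutation matrix of `w`. -/
def permMatrix (n : ℕ) (w : Equiv.Perm (Fin n)) : Matrix (Fin n) (Fin n) ℤ :=
  Matrix.of fun i j => if w i = j then 1 else 0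

/-- `w ∈ S_n^I`: `w(i) < w(i+1)` for all `i ∈ I` (indices 1-based). -/
def IsMinRep (n : ℕ) (I : Finset ℕ) (w : Equiv.Perm (Fin n)) : Prop :=
  ∀ p q : Fin n, (p.1 + 1) ∈ I → q.1 = p.1 + 1 → w p < w q

/-- Identity matrix. -/
def idMat (n : ℕ) : Matrix (Fin n) (Fin n) ℤ :=
  Matrix.of fun i j => if i = j then 1 else 0

/-- Rank of the top-left `i × j` submatrix of `Z` (for `i, j ≤ n`). -/
noncomputable def tlRank {K : Type*} [Field K] (n : ℕ) (Z : Matrix (Fin n) (Fin n) K)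
    (i j : ℕ) : ℕ :=
  (Matrix.of fun (p : Fin i) (q : Fin j) =>
      if h : p.1 < n ∧ q.1 < n then Z ⟨p.1, h.1⟩ ⟨q.1, h.2⟩ else 0).rank

/-- Membership in the ASM variety `X_A`: all top-left ranks of `Z` are bounded by `r_A`. -/
def memX {K : Type*} [Field K] (n : ℕ) (A : Matrix (Fin n) (Fin n) ℤ)
    (Z : Matrix (Fin n) (Fin n) K) : Prop :=
  ∀ i j, 1 ≤ i → i ≤ n → 1 ≤ j → j ≤ n → (tlRank n Z i j : ℤ) ≤ rk n A i j


section Helpers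

open Module Matrix

section rkLemmas

variable {n : ℕ} {B : Matrix (Fin n) (Fin n) ℤ}

lemma rk_eq_left (B : Matrix (Fin n) (Fin n) ℤ) (i j : ℕ) :
    rk n B i j = ∑ p : Fin n, if p.1 < i then (∑ q : Fin n, if q.1 < j then B p q else 0) else 0 := by
  unfold rk
  refine Finset.sum_congr rfl fun p _ => ?_
  by_cases h : p.1 < i
  · simp [h]
  · simp [h]

lemma rk_eq_right (B : Matrix (Fin n) (Fin n) ℤ) (i j : ℕ) :
    rk n B i j = ∑ q : Fin n, if q.1 < j then (∑ p : Fin n, if p.1 < i then B p q else 0) else 0 := by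
  unfold rk
  rw [Finset.sum_comm]
  refine Finset.sum_congr rfl fun q _ => ?_
  by_cases h : q.1 < j
  · simp [h]
  · simp [h]

lemma rk_zero_left (B : Matrix (Fin n) (Fin n) ℤ) (j : ℕ) : rk n B 0 j = 0 := by
  simp [rk]

lemma rk_zero_right (B : Matrix (Fin n) (Fin n) ℤ) (i : ℕ) : rk n B i 0 = 0 := by
  simp [rk]

lemma rk_succ_left (B : Matrix (Fin n) (Fin n) ℤ) (a j : ℕ) (ha : a < n) :
    rk n B (a + 1) j = rk n B a j + ∑ q : Fin n, if q.1 < j then B ⟨a, ha⟩ q else 0 := by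
  rw [rk_eq_left, rk_eq_left]
  set f : Fin n → ℤ := fun p => ∑ q : Fin n, if q.1 < j then B p q else 0 with hf
  have key : ∀ p : Fin n, (if p.1 < a + 1 then f p else 0)
      = (if p.1 < a then f p else 0) + (if p = ⟨a, ha⟩ then f p else 0) := by
    intro p
    rcases lt_trichotomy p.1 a with h | h | h
    · rw [if_pos (by omega), if_pos h, if_neg (by intro hp; rw [hp] at h; simp at h)]
      ring
    · rw [if_pos (by omega), if_neg (by omega), if_pos (by ext; exact h)]
      ring
    · rw [if_neg (by omega), if_neg (by omega), if_neg (by intro hp; rw [hp] at h; simp at h)]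
      ring
  calc (∑ p : Fin n, if p.1 < a + 1 then f p else 0)
      = ∑ p : Fin n, ((if p.1 < a then f p else 0) + (if p = ⟨a, ha⟩ then f p else 0)) :=
        Finset.sum_congr rfl fun p _ => key p
    _ = (∑ p : Fin n, if p.1 < a then f p else 0) + ∑ p : Fin n, (if p = ⟨a, ha⟩ then f p else 0) :=
        Finset.sum_add_distrib
    _ = (∑ p : Fin n, if p.1 < a then f p else 0) + f ⟨a, ha⟩ := by
        rw [Finset.sum_ite_eq' Finset.univ (⟨a, ha⟩ : Fin n) f]
        simp

lemma rk_succ_right (B : Matrix (Fin n) (Fin n) ℤ) (i b : ℕ) (hb : b < n) :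
    rk n B i (b + 1) = rk n B i b + ∑ p : Fin n, if p.1 < i then B p ⟨b, hb⟩ else 0 := by
  rw [rk_eq_right, rk_eq_right]
  set f : Fin n → ℤ := fun q => ∑ p : Fin n, if p.1 < i then B p q else 0 with hf
  have key : ∀ q : Fin n, (if q.1 < b + 1 then f q else 0)
      = (if q.1 < b then f q else 0) + (if q = ⟨b, hb⟩ then f q else 0) := by
    intro q
    rcases lt_trichotomy q.1 b with h | h | h
    · rw [if_pos (by omega), if_pos h, if_neg (by intro hq; rw [hq] at h; simp at h)]
      ring
    · rw [if_pos (by omega), if_neg (by omega), if_pos (by ext; exact h)]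
      ring
    · rw [if_neg (by omega), if_neg (by omega), if_neg (by intro hq; rw [hq] at h; simp at h)]
      ring
  calc (∑ q : Fin n, if q.1 < b + 1 then f q else 0)
      = ∑ q : Fin n, ((if q.1 < b then f q else 0) + (if q = ⟨b, hb⟩ then f q else 0)) :=
        Finset.sum_congr rfl fun q _ => key q
    _ = (∑ q : Fin n, if q.1 < b then f q else 0) + ∑ q : Fin n, (if q = ⟨b, hb⟩ then f q else 0) :=
        Finset.sum_add_distrib
    _ = (∑ q : Fin n, if q.1 < b then f q else 0) + f ⟨b, hb⟩ := by
        rw [Finset.sum_ite_eq' Finset.univ (⟨b, hb⟩ : Fin n) f]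
        simp

lemma rk_step_left (hB : IsASM n B) {a j : ℕ} (ha : a < n) (hj : j ≤ n) :
    rk n B (a + 1) j = rk n B a j ∨ rk n B (a + 1) j = rk n B a j + 1 := by
  rcases hB.2.1 ⟨a, ha⟩ j hj with h | h
  · left; rw [rk_succ_left B a j ha, h, add_zero]
  · right; rw [rk_succ_left B a j ha, h]

lemma rk_step_right (hB : IsASM n B) {i b : ℕ} (hi : i ≤ n) (hb : b < n) :
    rk n B i (b + 1) = rk n B i b ∨ rk n B i (b + 1) = rk n B i b + 1 := by
  rcases hB.2.2.1 ⟨b, hb⟩ i hi with h | h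
  · left; rw [rk_succ_right B i b hb, h, add_zero]
  · right; rw [rk_succ_right B i b hb, h]

lemma rk_mono_left (hB : IsASM n B) {a a' j : ℕ} (h : a ≤ a') (ha' : a' ≤ n) (hj : j ≤ n) :
    rk n B a j ≤ rk n B a' j := by
  have main : ∀ m, m ≤ n → ∀ a, a ≤ m → rk n B a j ≤ rk n B m j := by
    intro m
    induction m with
    | zero => intro _ a ha; have : a = 0 := by omega
              rw [this]
    | succ m ih =>
      intro hm a ha
      rcases Nat.lt_or_ge a (m + 1) with hlt | hge
      · have h1 : rk n B a j ≤ rk n B m j := ih (by omega) a (by omega)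
        rcases rk_step_left hB (by omega : m < n) hj with h2 | h2 <;> omega
      · have : a = m + 1 := by omega
        rw [this]
  exact main a' ha' a h

lemma rk_le_succ_left (hB : IsASM n B) {a j : ℕ} (ha : a < n) (hj : j ≤ n) :
    rk n B (a + 1) j ≤ rk n B a j + 1 := by
  rcases rk_step_left hB ha hj with h | h <;> omega

lemma rk_nonneg (hB : IsASM n B) {a j : ℕ} (ha : a ≤ n) (hj : j ≤ n) :
    0 ≤ rk n B a j := by
  have := rk_mono_left hB (Nat.zero_le a) ha hj
  rw [rk_zero_left] at this
  exact this

lemma rk_mono_right (hB : IsASM n B) {i b b' : ℕ} (hi : i ≤ n) (h : b ≤ b') (hb' : b' ≤ n) :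
    rk n B i b ≤ rk n B i b' := by
  have main : ∀ m, m ≤ n → ∀ b, b ≤ m → rk n B i b ≤ rk n B i m := by
    intro m
    induction m with
    | zero => intro _ b hb; have : b = 0 := by omega
              rw [this]
    | succ m ih =>
      intro hm b hb
      rcases Nat.lt_or_ge b (m + 1) with hlt | hge
      · have h1 : rk n B i b ≤ rk n B i m := ih (by omega) b (by omega)
        rcases rk_step_right hB hi (by omega : m < n) with h2 | h2 <;> omega
      · have : b = m + 1 := by omega
        rw [this]
  exact main b' hb' b h

lemma rk_right_lb (hB : IsASM n B) {i b j : ℕ} (hi : i ≤ n) (h : b ≤ j) (hj : j ≤ n) :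
    rk n B i j ≤ rk n B i b + (j - b : ℕ) := by
  have main : ∀ m, m ≤ n → ∀ b, b ≤ m → rk n B i m ≤ rk n B i b + (m - b : ℕ) := by
    intro m
    induction m with
    | zero => intro _ b hb; have : b = 0 := by omega
              simp [this]
    | succ m ih =>
      intro hm b hb
      rcases Nat.lt_or_ge b (m + 1) with hlt | hge
      · have h1 : rk n B i m ≤ rk n B i b + (m - b : ℕ) := ih (by omega) b (by omega)
        have h2 : rk n B i (m + 1) ≤ rk n B i m + 1 := by
          rcases rk_step_right hB hi (by omega : m < n) with h2 | h2 <;> omega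
        have h3 : ((m + 1 - b : ℕ) : ℤ) = ((m - b : ℕ) : ℤ) + 1 := by
          push_cast [Nat.succ_sub (by omega : b ≤ m)]
          ring
        omega
      · have : b = m + 1 := by omega
        simp [this]
  exact main j hj b h

lemma rk_top (hB : IsASM n B) {j : ℕ} (hj : j ≤ n) : rk n B n j = j := by
  have main : ∀ m, m ≤ n → rk n B n m = (m : ℤ) := by
    intro m
    induction m with
    | zero => intro _; simp [rk_zero_right]
    | succ m ih =>
      intro hm'
      have hm : m < n := by omega
      rw [rk_succ_right B n m hm]
      have hsum : (∑ p : Fin n, if p.1 < n then B p ⟨m, hm⟩ else 0) = ∑ p : Fin n, B p ⟨m, hm⟩ := by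
        refine Finset.sum_congr rfl fun p _ => ?_
        rw [if_pos p.2]
      rw [hsum, hB.2.2.2.2 ⟨m, hm⟩, ih (by omega)]
      push_cast
      ring
  exact main j hj

lemma exists_jump (hB : IsASM n B) {j s : ℕ} (hj : j ≤ n) (hs1 : 1 ≤ s) (hsj : s ≤ j) :
    ∃ a, a < n ∧ rk n B (a + 1) j = (s : ℤ) ∧ rk n B a j = (s : ℤ) - 1 := by
  have hPn : (s : ℤ) ≤ rk n B n j := by rw [rk_top hB hj]; exact_mod_cast hsj
  have hex : ∃ m, (s : ℤ) ≤ rk n B m j ∧ m ≤ n := ⟨n, hPn, le_refl n⟩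
  classical
  obtain ⟨m, hm, hmn⟩ := hex
  -- take least m with property
  let P : ℕ → Prop := fun m => (s : ℤ) ≤ rk n B m j
  have hPdec : DecidablePred P := fun m => inferInstanceAs (Decidable _)
  have hPn' : P n := hPn
  set m0 := Nat.find ⟨n, hPn'⟩ with hm0
  have hPm0 : P m0 := Nat.find_spec ⟨n, hPn'⟩
  have hm0n : m0 ≤ n := Nat.find_le hPn'
  have hm0pos : m0 ≠ 0 := by
    intro h0
    have : P 0 := h0 ▸ hPm0
    rw [show P 0 ↔ (s:ℤ) ≤ rk n B 0 j from Iff.rfl, rk_zero_left] at this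
    omega
  have hnotP : ¬ P (m0 - 1) := Nat.find_min ⟨n, hPn'⟩ (by omega)
  have ha : m0 - 1 < n := by omega
  have hstep : rk n B m0 j ≤ rk n B (m0 - 1) j + 1 := by
    have := rk_le_succ_left hB ha hj
    rwa [show m0 - 1 + 1 = m0 by omega] at this
  refine ⟨m0 - 1, ha, ?_, ?_⟩
  · rw [show m0 - 1 + 1 = m0 by omega]
    have h1 : (s : ℤ) ≤ rk n B m0 j := hPm0
    have h2 : rk n B (m0 - 1) j ≤ (s : ℤ) - 1 := by
      have := hnotP
      simp only [P, not_le] at this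
      omega
    omega
  · have h1 : (s : ℤ) ≤ rk n B m0 j := hPm0
    have h2 : rk n B (m0 - 1) j ≤ (s : ℤ) - 1 := by
      have := hnotP
      simp only [P, not_le] at this
      omega
    have h3 : rk n B m0 j - 1 ≤ rk n B (m0 - 1) j := by omega
    omega

end rkLemmas

lemma rank_eq_card_aux {K : Type*} [Field K] {a b : ℕ} (M : Matrix (Fin a) (Fin b) K)
    (S : Finset (Fin b)) (r : Fin b → ℕ)
    (hra : ∀ q ∈ S, r q < a)
    (hinj : ∀ q ∈ S, ∀ q' ∈ S, r q = r q' → q = q')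
    (hcol : ∀ q ∈ S, ∀ p : Fin a, M p q = if p.1 = r q then 1 else 0)
    (h0 : ∀ q ∉ S, ∀ p, M p q = 0) : M.rank = S.card := by
  classical
  -- the column vectors
  set w : Fin b → (Fin a → K) := fun q p => if p.1 = r q then 1 else 0 with hw
  set T : Finset (Fin a → K) := S.image w with hT
  have hwB : ∀ q, ∀ hq : q ∈ S, w q = (Pi.basisFun K (Fin a)) ⟨r q, hra q hq⟩ := by
    intro q hq
    funext p
    rw [Pi.basisFun_apply]
    simp only [hw, Pi.single_apply]
    by_cases h : p.1 = r q
    · rw [if_pos h, if_pos (by ext; exact h)]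
    · rw [if_neg h, if_neg (by intro hp; apply h; rw [hp])]
  have hwinj : ∀ q ∈ S, ∀ q' ∈ S, w q = w q' → q = q' := by
    intro q hq q' hq' he
    apply hinj q hq q' hq'
    have h1 : (1 : K) = if r q = r q' then 1 else 0 := by
      simpa [hw] using congrFun he ⟨r q, hra q hq⟩
    split_ifs at h1 with hc
    · exact hc
    · exact absurd h1.symm (by norm_num)
  have hTcard : T.card = S.card := Finset.card_image_of_injOn (fun q hq q' hq' => hwinj q hq q' hq')
  -- span equality
  have hspan : Submodule.span K (Set.range Mᵀ) = Submodule.span K (T : Set (Fin a → K)) := by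
    apply le_antisymm
    · rw [Submodule.span_le]
      rintro v ⟨q, rfl⟩
      by_cases hq : q ∈ S
      · apply Submodule.subset_span
        rw [Finset.coe_image]
        refine ⟨q, hq, ?_⟩
        funext p
        simp only [hw, Matrix.transpose_apply]
        exact (hcol q hq p).symm
      · have : Mᵀ q = 0 := by
          funext p
          exact h0 q hq p
        rw [this]
        exact Submodule.zero_mem _
    · rw [Submodule.span_le]
      intro v hv
      rw [Finset.coe_image] at hv
      obtain ⟨q, hq, rfl⟩ := hv
      apply Submodule.subset_span
      refine ⟨q, ?_⟩
      funext p
      simp only [hw, Matrix.transpose_apply]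
      exact hcol q hq p
  have hli : LinearIndependent K ((↑) : {x // x ∈ T} → (Fin a → K)) := by
    have hsub : (T : Set (Fin a → K)) ⊆ Set.range (Pi.basisFun K (Fin a)) := by
      intro v hv
      rw [Finset.coe_image] at hv
      obtain ⟨q, hq, rfl⟩ := hv
      exact ⟨⟨r q, hra q hq⟩, (hwB q hq).symm⟩
    exact LinearIndepOn.mono ((linearIndepOn_id_range_iff (Pi.basisFun K (Fin a)).injective).mpr (Pi.basisFun K (Fin a)).linearIndependent) hsub
  rw [Matrix.rank_eq_finrank_span_cols, show M.col = Mᵀ from rfl, hspan, finrank_span_finset_eq_card hli, hTcard]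

lemma card_filter_val_Ico (b lo j : ℕ) [DecidablePred fun q : Fin b => lo ≤ q.1 ∧ q.1 < j] :
    (Finset.univ.filter (fun q : Fin b => lo ≤ q.1 ∧ q.1 < j)).card = min j b - lo := by
  classical
  rw [← Nat.card_Ico lo (min j b)]
  apply Finset.card_bij (fun q _ => q.1)
  · intro q hq
    simp only [Finset.mem_filter, Finset.mem_univ, true_and] at hq
    simp only [Finset.mem_Ico]
    exact ⟨hq.1, by have := q.2; omega⟩
  · intro q hq q' hq' h
    exact Fin.ext h
  · intro x hx
    simp only [Finset.mem_Ico] at hx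
    refine ⟨⟨x, by omega⟩, ?_, rfl⟩
    simp only [Finset.mem_filter, Finset.mem_univ, true_and]
    exact ⟨hx.1, by omega⟩

lemma realize {K : Type*} [Field K] {n : ℕ} {B : Matrix (Fin n) (Fin n) ℤ}
    (hB : IsASM n B) {j : ℕ} (hj1 : 1 ≤ j) (hjn : j ≤ n) :
    ∃ Z : Matrix (Fin n) (Fin n) K, memX n B Z ∧
      ∀ a, a ≤ n → (tlRank n Z a j : ℤ) = rk n B a j := by
  classical
  have hex : ∀ s : ℕ, 1 ≤ s ∧ s ≤ j →
      ∃ a, a < n ∧ rk n B (a + 1) j = (s : ℤ) ∧ rk n B a j = (s : ℤ) - 1 :=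
    fun s hs => exists_jump hB hjn hs.1 hs.2
  choose g hg using hex
  set g' : ℕ → ℕ := fun s => if h : 1 ≤ s ∧ s ≤ j then g s h else 0 with hg'def
  have hg' : ∀ s, 1 ≤ s → s ≤ j →
      g' s < n ∧ rk n B (g' s + 1) j = (s : ℤ) ∧ rk n B (g' s) j = (s : ℤ) - 1 := by
    intro s hs1 hsj
    simp only [hg'def, dif_pos (And.intro hs1 hsj)]
    exact hg s ⟨hs1, hsj⟩
  have hkey : ∀ s, 1 ≤ s → s ≤ j → ∀ a, a ≤ n → (g' s < a ↔ (s : ℤ) ≤ rk n B a j) := by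
    intro s hs1 hsj a ha
    obtain ⟨hgn, hg1, hg2⟩ := hg' s hs1 hsj
    constructor
    · intro h
      calc (s : ℤ) = rk n B (g' s + 1) j := hg1.symm
        _ ≤ rk n B a j := rk_mono_left hB (by omega) ha hjn
    · intro h
      by_contra hc
      push_neg at hc
      have := rk_mono_left hB hc (le_of_lt hgn) hjn
      omega
  set Z : Matrix (Fin n) (Fin n) K :=
    Matrix.of (fun p q : Fin n => if q.1 < j ∧ p.1 = g' (j - q.1) then (1 : K) else 0) with hZdef
  have hcomp : ∀ a b, a ≤ n → b ≤ n →
      tlRank n Z a b = min j b - (j - (rk n B a j).toNat) := by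
    intro a b ha hb
    have hRnn : ((rk n B a j).toNat : ℤ) = rk n B a j :=
      Int.toNat_of_nonneg (rk_nonneg hB ha hjn)
    set Rn := (rk n B a j).toNat with hRn
    set M := (Matrix.of fun (p : Fin a) (q : Fin b) =>
      if h : p.1 < n ∧ q.1 < n then Z ⟨p.1, h.1⟩ ⟨q.1, h.2⟩ else 0) with hMdef
    have hM : ∀ (p : Fin a) (q : Fin b),
        M p q = if q.1 < j ∧ p.1 = g' (j - q.1) then (1 : K) else 0 := by
      intro p q
      have hpn : p.1 < n := lt_of_lt_of_le p.2 ha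
      have hqn : q.1 < n := lt_of_lt_of_le q.2 hb
      simp only [hMdef, Matrix.of_apply, dif_pos (And.intro hpn hqn), hZdef]
    set S : Finset (Fin b) :=
      Finset.univ.filter (fun q => q.1 < j ∧ g' (j - q.1) < a) with hS
    have hrank : M.rank = S.card := by
      apply rank_eq_card_aux M S (fun q => g' (j - q.1))
      · intro q hq
        simp only [hS, Finset.mem_filter, Finset.mem_univ, true_and] at hq
        exact hq.2
      · intro q hq q' hq' he
        simp only [hS, Finset.mem_filter, Finset.mem_univ, true_and] at hq hq'
        have h1 := (hg' (j - q.1) (by omega) (by omega)).2.1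
        have h2 := (hg' (j - q'.1) (by omega) (by omega)).2.1
        rw [he] at h1
        have : ((j - q.1 : ℕ) : ℤ) = ((j - q'.1 : ℕ) : ℤ) := by rw [← h1, ← h2]
        have : q.1 = q'.1 := by omega
        exact Fin.ext this
      · intro q hq p
        simp only [hS, Finset.mem_filter, Finset.mem_univ, true_and] at hq
        rw [hM p q]
        by_cases hp : p.1 = g' (j - q.1)
        · rw [if_pos ⟨hq.1, hp⟩, if_pos hp]
        · rw [if_neg (fun hc => hp hc.2), if_neg hp]
      · intro q hq p
        simp only [hS, Finset.mem_filter, Finset.mem_univ, true_and, not_and, not_lt] at hq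
        rw [hM p q]
        by_cases hqj : q.1 < j
        · have := hq hqj
          exact if_neg (fun hc => by have := hc.2; have := p.2; omega)
        · exact if_neg (fun hc => hqj hc.1)
    have hSeq : S = Finset.univ.filter (fun q : Fin b => j - Rn ≤ q.1 ∧ q.1 < j) := by
      ext q
      simp only [hS, Finset.mem_filter, Finset.mem_univ, true_and]
      constructor
      · rintro ⟨h1, h2⟩
        have := (hkey (j - q.1) (by omega) (by omega) a ha).mp h2
        refine ⟨by omega, h1⟩
      · rintro ⟨h1, h2⟩
        refine ⟨h2, (hkey (j - q.1) (by omega) (by omega) a ha).mpr ?_⟩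
        omega
    have : tlRank n Z a b = M.rank := rfl
    rw [this, hrank, hSeq, card_filter_val_Ico]
  have hRtop : ∀ a, a ≤ n → rk n B a j ≤ (j : ℤ) := by
    intro a ha
    rw [← rk_top hB hjn]
    exact rk_mono_left hB ha le_rfl hjn
  refine ⟨Z, ?_, ?_⟩
  · intro a b ha1 ha hb1 hb
    rw [hcomp a b ha hb]
    have hRnn : ((rk n B a j).toNat : ℤ) = rk n B a j :=
      Int.toNat_of_nonneg (rk_nonneg hB ha hjn)
    have hRbb : ((rk n B a b).toNat : ℤ) = rk n B a b :=
      Int.toNat_of_nonneg (rk_nonneg hB ha hb)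
    have htop := hRtop a ha
    rcases le_or_gt b j with hbj | hjb
    · have := rk_right_lb hB ha hbj hjn
      omega
    · have := rk_mono_right hB ha (le_of_lt hjb) hb
      omega
  · intro a ha
    rw [hcomp a j ha hjn]
    have hRnn : ((rk n B a j).toNat : ℤ) = rk n B a j :=
      Int.toNat_of_nonneg (rk_nonneg hB ha hjn)
    have htop := hRtop a ha
    omega

end Helpers

/-- If `A_1, …, A_k ∈ ASM^I(n)` and `X_{A_1} ∪ ⋯ ∪ X_{A_k} = X_A` for some `A ∈ ASM(n)`,
then `A ∈ ASM^I(n)`. -/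
theorem stmt9 (K : Type*) [Field K] (n : ℕ) (hn : 1 ≤ n)
    (I : Finset ℕ) (hI : I ⊆ Finset.Icc 1 (n - 1)) (k : ℕ) (hk : 1 ≤ k)
    (As : Fin k → Matrix (Fin n) (Fin n) ℤ) (hAs : ∀ t, InASMI n I (As t))
    (A : Matrix (Fin n) (Fin n) ℤ) (hA : IsASM n A)
    (hunion : ∀ Z : Matrix (Fin n) (Fin n) K, memX n A Z ↔ ∃ t, memX n (As t) Z) :
    InASMI n I A := by
  refine ⟨hA, ?_⟩
  intro i hi jj hjj1 hjjn
  by_contra hcon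
  push_neg at hcon
  obtain ⟨hc1, hc2⟩ := hcon
  have hii : 1 ≤ i ∧ i ≤ n - 1 := Finset.mem_Icc.mp (hI hi)
  have hin : i < n := by omega
  -- row i partial sum is 0
  have e1 : rk n A i jj = rk n A (i - 1) jj := by
    have h := rk_succ_left A (i - 1) jj (by omega)
    rw [show i - 1 + 1 = i by omega] at h
    rcases hA.2.1 ⟨i - 1, by omega⟩ jj hjjn with hs | hs
    · rw [h, hs, add_zero]
    · exact absurd (by rw [h, hs]) hc1
  -- row i+1 partial sum is 1
  have e2 : rk n A (i + 1) jj = rk n A i jj + 1 := by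
    have h := rk_succ_left A i jj hin
    rcases hA.2.1 ⟨i, hin⟩ jj hjjn with hs | hs
    · exact absurd (by rw [h, hs, add_zero]) hc2
    · rw [h, hs]
  obtain ⟨Z, hZmem, hZrk⟩ := realize (K := K) hA hjj1 hjjn
  obtain ⟨t, ht⟩ := (hunion Z).mp hZmem
  have hb1 : rk n A i jj + 1 ≤ rk n (As t) (i + 1) jj := by
    have h := ht (i + 1) jj (by omega) (by omega) hjj1 hjjn
    rw [hZrk (i + 1) (by omega), e2] at h
    exact h
  have hb2 : rk n A (i - 1) jj ≤ rk n (As t) (i - 1) jj := by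
    rcases Nat.eq_zero_or_pos (i - 1) with h0 | hpos
    · rw [h0, rk_zero_left, rk_zero_left]
    · have h := ht (i - 1) jj (by omega) (by omega) hjj1 hjjn
      rw [hZrk (i - 1) (by omega)] at h
      exact h
  have hprop := (hAs t).2 i hi jj hjj1 hjjn
  have hbig : rk n A i jj + 1 ≤ rk n (As t) i jj := by
    rcases hprop with h | h <;> omega
  obtain ⟨W, hWmem, hWrk⟩ := realize (K := K) (hAs t).1 hjj1 hjjn
  have hWA : memX n A W := (hunion W).mpr ⟨t, hWmem⟩
  have hfin := hWA i jj (by omega) (by omega) hjj1 hjjn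
  rw [hWrk i (by omega)] at hfin
  omega
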